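/- Let p and q be distinct primes, let ρ, σ be the unique nonnegative integers with ρp + σq = (p−1)(q−1), and let f(x) = Σ_{s=0}^{n} a_s x^{qs} be an integer polynomial supported on multiples of q. Then H(Φ_{pq}(x)·f(x)) ≤ max{σ+1, p−(σ+1)}·H(f). -/

import Mathlib

open Polynomial

noncomputable def Height (f : Polynomial ℤ) : ℕ :=
  f.support.sup fun i => (f.coeff i).natAbs

noncomputable def Tsum (f : Polynomial ℤ) : ℕ :=
  ∑ i ∈ f.support, (f.coeff i).natAbs

noncomputable def B (n : ℕ) : ℕ :=
  sSup {h : ℕ | ∃ f : Polynomial ℤ, f ∣ X ^ n - 1 ∧ Height f = h}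

open Finset

lemma coeff_natAbs_le_height (f : Polynomial ℤ) (m : ℕ) : (f.coeff m).natAbs ≤ Height f := by
  by_cases h : f.coeff m = 0
  · simp [h]
  · exact Finset.le_sup (f := fun i => (f.coeff i).natAbs) (Polynomial.mem_support_iff.mpr h)

lemma height_le_of (f : Polynomial ℤ) (M : ℕ) (h : ∀ m, (f.coeff m).natAbs ≤ M) : Height f ≤ M :=
  Finset.sup_le fun i _ => h i

lemma natAbs_sum_le' {ι : Type*} (s : Finset ι) (f : ι → ℤ) :
    (∑ i ∈ s, f i).natAbs ≤ ∑ i ∈ s, (f i).natAbs := by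
  have h1 : |∑ i ∈ s, f i| ≤ ∑ i ∈ s, |f i| := abs_sum_le_sum_abs f s
  have h2 : (∑ i ∈ s, |f i|) = ((∑ i ∈ s, (f i).natAbs : ℕ) : ℤ) := by
    push_cast
    rfl
  rw [h2, Int.abs_eq_natAbs] at h1
  exact_mod_cast h1

noncomputable def FF (p q ρ σ : ℕ) : Polynomial ℤ :=
  (∑ i ∈ Finset.range (ρ+1), ∑ j ∈ Finset.range (σ+1), (X:Polynomial ℤ)^(p*i+q*j))
  - ∑ i ∈ Finset.Ico (ρ+1) q, ∑ j ∈ Finset.Ico (σ+1) p, (X:Polynomial ℤ)^(p*i+q*j-p*q)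

lemma FF_eq_cyclotomic (p q ρ σ : ℕ) (hp : p.Prime) (hq : q.Prime) (hpq : p ≠ q)
    (hu : p*(ρ+1) + q*(σ+1) = p*q+1) (hρ : ρ+1 ≤ q) :
    FF p q ρ σ = cyclotomic (p*q) ℤ := by
  haveI : Fact q.Prime := ⟨hq⟩
  have hpq' : ¬ p ∣ q := fun hd => hpq ((Nat.prime_dvd_prime_iff_eq hp hq).mp hd)
  set A : Polynomial ℤ := ∑ i ∈ Finset.range (ρ+1), ((X:Polynomial ℤ)^p)^i with hAdef
  set Bp : Polynomial ℤ := ∑ j ∈ Finset.range (σ+1), ((X:Polynomial ℤ)^q)^j with hBdef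
  set Cp : Polynomial ℤ := ∑ i ∈ Finset.Ico (ρ+1) q, ((X:Polynomial ℤ)^p)^i with hCdef
  set Dp : Polynomial ℤ := ∑ j ∈ Finset.Ico (σ+1) p, ((X:Polynomial ℤ)^q)^j with hDdef
  set E : Polynomial ℤ := ∑ i ∈ Finset.Ico (ρ+1) q, ∑ j ∈ Finset.Ico (σ+1) p,
      (X:Polynomial ℤ)^(p*i+q*j-p*q) with hEdef
  -- the first double sum equals A * Bp
  have hABsum : (∑ i ∈ Finset.range (ρ+1), ∑ j ∈ Finset.range (σ+1),
      (X:Polynomial ℤ)^(p*i+q*j)) = A * Bp := by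
    rw [hAdef, hBdef, Finset.sum_mul_sum]
    refine Finset.sum_congr rfl fun i _ => Finset.sum_congr rfl fun j _ => ?_
    rw [← pow_mul, ← pow_mul, ← pow_add]
  have hFF : FF p q ρ σ = A * Bp - E := by rw [FF, hABsum]
  -- E * X^(p*q) = Cp * Dp
  have hE : E * X^(p*q) = Cp * Dp := by
    rw [hEdef, hCdef, hDdef, Finset.sum_mul_sum, Finset.sum_mul]
    refine Finset.sum_congr rfl fun i hi => ?_
    rw [Finset.sum_mul]
    refine Finset.sum_congr rfl fun j hj => ?_
    rw [← pow_mul, ← pow_mul, ← pow_add, ← pow_add]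
    congr 1
    have hi' := (Finset.mem_Ico.mp hi).1
    have hj' := (Finset.mem_Ico.mp hj).1
    have h1 : p*(ρ+1) ≤ p*i := Nat.mul_le_mul_left p hi'
    have h2 : q*(σ+1) ≤ q*j := Nat.mul_le_mul_left q hj'
    have h3 : p*q + 1 ≤ p*i + q*j := hu ▸ Nat.add_le_add h1 h2
    omega
  -- geometric identities
  have hA : A * ((X:Polynomial ℤ)^p - 1) = ((X:Polynomial ℤ)^p)^(ρ+1) - 1 := geom_sum_mul _ _
  have hB : Bp * ((X:Polynomial ℤ)^q - 1) = ((X:Polynomial ℤ)^q)^(σ+1) - 1 := geom_sum_mul _ _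
  have hAC : (A + Cp) * ((X:Polynomial ℤ)^p - 1) = X^(p*q) - 1 := by
    rw [hAdef, hCdef, Finset.sum_range_add_sum_Ico _ hρ, geom_sum_mul, ← pow_mul]
  have hBD : (Bp + Dp) * ((X:Polynomial ℤ)^q - 1) = X^(p*q) - 1 := by
    have hσ : σ + 1 ≤ p := by
      by_contra hc
      push_neg at hc
      have h5 : q*(p+1) ≤ q*(σ+1) := Nat.mul_le_mul_left q (by omega)
      have h6 : q*(p+1) = q*p + q := by ring
      have h4 : p ≤ p*(ρ+1) := Nat.le_mul_of_pos_right p (by omega)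
      have hqp : q*p = p*q := Nat.mul_comm q p
      have hq2 := hq.two_le
      have hp2 := hp.two_le
      omega
    rw [hBdef, hDdef, Finset.sum_range_add_sum_Ico _ hσ, geom_sum_mul, ← pow_mul, Nat.mul_comm q p]
  have hC : Cp * ((X:Polynomial ℤ)^p - 1) = X^(p*q) - ((X:Polynomial ℤ)^p)^(ρ+1) := by
    linear_combination hAC - hA
  have hD : Dp * ((X:Polynomial ℤ)^q - 1) = X^(p*q) - ((X:Polynomial ℤ)^q)^(σ+1) := by
    linear_combination hBD - hB
  have hX : ((X:Polynomial ℤ)^p)^(ρ+1) * ((X:Polynomial ℤ)^q)^(σ+1) = X^(p*q) * X := by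
    rw [← pow_mul, ← pow_mul, ← pow_add, hu, pow_succ]
  -- the main algebraic identity
  have key : (A * Bp * X^(p*q) - Cp * Dp) * (((X:Polynomial ℤ)^p - 1) * ((X:Polynomial ℤ)^q - 1))
      = (X^(p*q) - 1) * (X - 1) * X^(p*q) := by
    have e : (A * Bp * X^(p*q) - Cp * Dp) * (((X:Polynomial ℤ)^p - 1) * ((X:Polynomial ℤ)^q - 1))
        = X^(p*q) * (A * ((X:Polynomial ℤ)^p - 1)) * (Bp * ((X:Polynomial ℤ)^q - 1))
          - (Cp * ((X:Polynomial ℤ)^p - 1)) * (Dp * ((X:Polynomial ℤ)^q - 1)) := by ring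
    rw [e, hA, hB, hC, hD]
    linear_combination ((X:Polynomial ℤ)^(p*q) - 1) * hX
  -- the cyclotomic side
  have e1 := cyclotomic_expand_eq_cyclotomic_mul (R := ℤ) hp hpq'
  rw [Nat.mul_comm q p] at e1
  have e2 : (expand ℤ p) (cyclotomic q ℤ) = ∑ i ∈ Finset.range q, ((X:Polynomial ℤ)^p)^i := by
    rw [cyclotomic_prime, map_sum]
    exact Finset.sum_congr rfl fun i _ => by rw [map_pow, expand_X]
  have e12 : cyclotomic (p*q) ℤ * cyclotomic q ℤ = ∑ i ∈ Finset.range q, ((X:Polynomial ℤ)^p)^i :=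
    e1.symm.trans e2
  have hq3 : cyclotomic q ℤ * ((X:Polynomial ℤ) - 1) = X^q - 1 := by
    rw [cyclotomic_prime]; exact geom_sum_mul _ _
  have hgeo : (∑ i ∈ Finset.range q, ((X:Polynomial ℤ)^p)^i) * ((X:Polynomial ℤ)^p - 1)
      = X^(p*q) - 1 := by rw [geom_sum_mul, ← pow_mul]
  have hRHS : cyclotomic (p*q) ℤ * (((X:Polynomial ℤ)^p - 1) * ((X:Polynomial ℤ)^q - 1))
      = ((X:Polynomial ℤ)^(p*q) - 1) * (X - 1) := by
    linear_combination (((X:Polynomial ℤ)^p - 1) * (X - 1)) * e12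
      - (cyclotomic (p*q) ℤ * ((X:Polynomial ℤ)^p - 1)) * hq3 + (X - 1) * hgeo
  -- put it together
  have hXppos : p ≠ 0 := hp.pos.ne'
  have hcof : (((X:Polynomial ℤ)^p - 1) * ((X:Polynomial ℤ)^q - 1)) ≠ 0 := by
    apply mul_ne_zero
    · intro hh
      have := congrArg (fun g : Polynomial ℤ => g.coeff 0) hh
      simp [coeff_X_pow, hXppos, (Ne.symm hXppos)] at this
    · intro hh
      have := congrArg (fun g : Polynomial ℤ => g.coeff 0) hh
      simp [coeff_X_pow, hq.pos.ne', (Ne.symm hq.pos.ne')] at this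
  apply mul_right_cancel₀ hcof
  rw [hRHS]
  apply mul_right_cancel₀ (pow_ne_zero (p*q) (X_ne_zero : (X:Polynomial ℤ) ≠ 0))
  rw [hFF]
  calc (A * Bp - E) * (((X:Polynomial ℤ)^p - 1) * ((X:Polynomial ℤ)^q - 1)) * X^(p*q)
      = (A * Bp * X^(p*q) - E * X^(p*q)) * (((X:Polynomial ℤ)^p - 1) * ((X:Polynomial ℤ)^q - 1)) := by
        ring
    _ = (A * Bp * X^(p*q) - Cp * Dp) * (((X:Polynomial ℤ)^p - 1) * ((X:Polynomial ℤ)^q - 1)) := by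
        rw [hE]
    _ = (X^(p*q) - 1) * (X - 1) * X^(p*q) := key

theorem FF_height_bound (p q : ℕ) (hp : p.Prime) (hq : q.Prime) (hpq : p ≠ q)
    (ρ σ : ℕ) (h : ρ * p + σ * q = (p - 1) * (q - 1))
    (n : ℕ) (a : ℕ → ℤ) (f : Polynomial ℤ)
    (hf : f = ∑ s ∈ Finset.range (n + 1), C (a s) * X ^ (q * s)) :
    Height (FF p q ρ σ * f) ≤ max (σ + 1) (p - (σ + 1)) * Height f := by
  have hp2 := hp.two_le
  have hq2 := hq.two_le
  have huz : (p:ℤ)*(ρ+1) + q*(σ+1) = p*q+1 := by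
    have hz : ((ρ*p + σ*q : ℕ) : ℤ) = (((p-1)*(q-1) : ℕ) : ℤ) := by exact_mod_cast congrArg (fun x : ℕ => (x:ℤ)) h
    push_cast [Nat.cast_sub hp.one_le, Nat.cast_sub hq.one_le] at hz
    linear_combination hz
  have hu : p*(ρ+1) + q*(σ+1) = p*q+1 := by exact_mod_cast huz
  have hρ : ρ+1 ≤ q := by
    by_contra hc
    push_neg at hc
    have h1 : p*(q+1) ≤ p*(ρ+1) := Nat.mul_le_mul_left p (by omega)
    have h2 : p*(ρ+1) ≤ p*q+1 := le_trans (Nat.le_add_right _ _) hu.le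
    have h3 : p*(q+1) = p*q + p := by ring
    omega
  -- f is supported on multiples of q
  have hfq : ∀ m : ℕ, ¬ q ∣ m → f.coeff m = 0 := by
    intro m hm
    rw [hf, finset_sum_coeff]
    apply Finset.sum_eq_zero
    intro s _
    rw [coeff_C_mul, coeff_X_pow]
    have hne : ¬ (m = q*s) := fun he => hm ⟨s, he⟩
    simp [hne]
  set Bf : Polynomial ℤ := (∑ j ∈ Finset.range (σ+1), (X:Polynomial ℤ)^(q*j)) * f with hBfdef
  have hBfdvd : ∀ m : ℕ, ¬ q ∣ m → Bf.coeff m = 0 := by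
    intro m hm
    rw [hBfdef, Finset.sum_mul, finset_sum_coeff]
    apply Finset.sum_eq_zero
    intro j _
    rw [X_pow_mul, coeff_mul_X_pow']
    split_ifs with hle
    · apply hfq
      rintro ⟨c, hc⟩
      have hqd : q*(c+j) = q*c + q*j := Nat.mul_add q c j
      exact hm ⟨c+j, by omega⟩
    · rfl
  have hBfle : ∀ m : ℕ, (Bf.coeff m).natAbs ≤ (σ+1) * Height f := by
    intro m
    rw [hBfdef, Finset.sum_mul, finset_sum_coeff]
    calc (∑ j ∈ Finset.range (σ+1), ((X:Polynomial ℤ)^(q*j) * f).coeff m).natAbs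
        ≤ ∑ j ∈ Finset.range (σ+1), (((X:Polynomial ℤ)^(q*j) * f).coeff m).natAbs :=
          natAbs_sum_le' _ _
      _ ≤ (Finset.range (σ+1)).card • Height f := by
          apply Finset.sum_le_card_nsmul
          intro j _
          rw [X_pow_mul, coeff_mul_X_pow']
          split_ifs with hle
          · exact coeff_natAbs_le_height f _
          · simp
      _ = (σ+1) * Height f := by rw [Finset.card_range, smul_eq_mul]
  -- the per-coefficient bound
  have key : ∀ e : ℕ, ((FF p q ρ σ * f).coeff e).natAbs ≤ max (σ + 1) (p - (σ + 1)) * Height f := by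
    intro e
    set v : ℕ → ℤ := fun i =>
      (((∑ j ∈ Finset.Ico (σ+1) p, (X:Polynomial ℤ)^(p*i+q*j-p*q)) * f).coeff e) with hvdef
    set t : ℕ → ℤ := fun i => if i ≤ ρ then (Bf * X^(p*i)).coeff e else -(v i) with htdef
    have hnj : ∀ i j : ℕ, ρ+1 ≤ i → σ+1 ≤ j → (p*i+q*j-p*q) + p*q = p*i + q*j := by
      intro i j hi hj
      have h1 : p*(ρ+1) ≤ p*i := Nat.mul_le_mul_left p hi
      have h2 : q*(σ+1) ≤ q*j := Nat.mul_le_mul_left q hj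
      have h3 : p*q + 1 ≤ p*i + q*j := hu ▸ Nat.add_le_add h1 h2
      omega
    -- the coefficient as a single sum over i < q
    have hsum : (FF p q ρ σ * f).coeff e = ∑ i ∈ Finset.range q, t i := by
      have hsplit : FF p q ρ σ * f
          = (∑ i ∈ Finset.range (ρ+1), Bf * X^(p*i))
            - ∑ i ∈ Finset.Ico (ρ+1) q,
                (∑ j ∈ Finset.Ico (σ+1) p, (X:Polynomial ℤ)^(p*i+q*j-p*q)) * f := by
        rw [FF, sub_mul, Finset.sum_mul, Finset.sum_mul]
        congr 1
        refine Finset.sum_congr rfl fun i _ => ?_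
        rw [hBfdef, Finset.sum_mul, Finset.sum_mul, Finset.sum_mul]
        refine Finset.sum_congr rfl fun j _ => ?_
        rw [pow_add]
        ring
      have hts : ∑ i ∈ Finset.range q, t i
          = (∑ i ∈ Finset.range (ρ+1), (Bf * X^(p*i)).coeff e)
            + ∑ i ∈ Finset.Ico (ρ+1) q, -(v i) := by
        rw [← Finset.sum_range_add_sum_Ico t hρ]
        congr 1
        · refine Finset.sum_congr rfl fun i hi => ?_
          have : i ≤ ρ := by have := Finset.mem_range.mp hi; omega
          simp [htdef, this]
        · refine Finset.sum_congr rfl fun i hi => ?_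
          have : ¬ (i ≤ ρ) := by have := (Finset.mem_Ico.mp hi).1; omega
          simp [htdef, this]
      rw [hsplit, coeff_sub, finset_sum_coeff, finset_sum_coeff, hts, Finset.sum_neg_distrib]
      ring
    -- vanishing criterion
    have hvan : ∀ i : ℕ, i < q → t i ≠ 0 → (p*i) % q = e % q := by
      intro i hi hne
      by_cases hc : i ≤ ρ
      · have hne2 : (Bf * X^(p*i)).coeff e ≠ 0 := by simpa [htdef, hc] using hne
        rw [coeff_mul_X_pow'] at hne2
        split_ifs at hne2 with hle
        · have hd : q ∣ e - p*i := by
            by_contra hd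
            exact hne2 (hBfdvd _ hd)
          obtain ⟨c, hcc⟩ := hd
          have he : e = p*i + q*c := by omega
          rw [he, Nat.add_mul_mod_self_left]
        · exact absurd rfl hne2
      · have hne2 : ((∑ j ∈ Finset.Ico (σ+1) p, (X:Polynomial ℤ)^(p*i+q*j-p*q)) * f).coeff e ≠ 0 := by
          simpa [htdef, hvdef, hc] using hne
        rw [Finset.sum_mul, finset_sum_coeff] at hne2
        obtain ⟨j, hj, hjne⟩ := Finset.exists_ne_zero_of_sum_ne_zero hne2
        rw [X_pow_mul, coeff_mul_X_pow'] at hjne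
        split_ifs at hjne with hle
        · have hd : q ∣ e - (p*i+q*j-p*q) := by
            by_contra hd
            exact hjne (hfq _ hd)
          obtain ⟨c, hcc⟩ := hd
          have hij := hnj i j (by omega) (Finset.mem_Ico.mp hj).1
          have he : e + q*p = p*i + q*(j+c) := by
            have : q*(j+c) = q*j + q*c := Nat.mul_add q j c
            have : q*p = p*q := Nat.mul_comm q p
            omega
          calc (p*i) % q = (p*i + q*(j+c)) % q := (Nat.add_mul_mod_self_left _ _ _).symm
            _ = (e + q*p) % q := by rw [he]
            _ = e % q := Nat.add_mul_mod_self_left _ _ _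
        · exact absurd rfl hjne
    -- bound on each t i
    have hbound : ∀ i : ℕ, (t i).natAbs ≤ max (σ + 1) (p - (σ + 1)) * Height f := by
      intro i
      simp only [htdef]
      split_ifs with hc
      · rw [coeff_mul_X_pow']
        split_ifs with hle
        · calc (Bf.coeff (e - p*i)).natAbs ≤ (σ+1) * Height f := hBfle _
            _ ≤ max (σ + 1) (p - (σ + 1)) * Height f :=
              Nat.mul_le_mul_right _ (le_max_left _ _)
        · simp
      · simp only [Int.natAbs_neg, hvdef, Finset.sum_mul, finset_sum_coeff]
        calc (∑ j ∈ Finset.Ico (σ+1) p, ((X:Polynomial ℤ)^(p*i+q*j-p*q) * f).coeff e).natAbs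
            ≤ ∑ j ∈ Finset.Ico (σ+1) p, (((X:Polynomial ℤ)^(p*i+q*j-p*q) * f).coeff e).natAbs :=
              natAbs_sum_le' _ _
          _ ≤ (Finset.Ico (σ+1) p).card • Height f := by
              apply Finset.sum_le_card_nsmul
              intro j _
              rw [X_pow_mul, coeff_mul_X_pow']
              split_ifs with hle
              · exact coeff_natAbs_le_height f _
              · simp
          _ = (p - (σ+1)) * Height f := by rw [Nat.card_Ico, smul_eq_mul]
          _ ≤ max (σ + 1) (p - (σ + 1)) * Height f :=
              Nat.mul_le_mul_right _ (le_max_right _ _)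
    by_cases hcase : ∀ i ∈ Finset.range q, t i = 0
    · rw [hsum, Finset.sum_eq_zero hcase]
      simp
    · push_neg at hcase
      obtain ⟨i₀, hi₀, hne⟩ := hcase
      have hsingle : ∑ i ∈ Finset.range q, t i = t i₀ := by
        apply Finset.sum_eq_single_of_mem i₀ hi₀
        intro b hb hbne
        by_contra hb0
        have e1 := hvan b (Finset.mem_range.mp hb) hb0
        have e2 := hvan i₀ (Finset.mem_range.mp hi₀) hne
        have hmod : p*b ≡ p*i₀ [MOD q] := e1.trans e2.symm
        have hcop : Nat.gcd q p = 1 := (Nat.coprime_primes hq hp).mpr (Ne.symm hpq)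
        have hbi := Nat.ModEq.cancel_left_of_coprime hcop hmod
        have hb' := Nat.mod_eq_of_lt (Finset.mem_range.mp hb)
        have hi' := Nat.mod_eq_of_lt (Finset.mem_range.mp hi₀)
        unfold Nat.ModEq at hbi
        omega
      rw [hsum, hsingle]
      exact hbound i₀
  exact height_le_of _ _ key

theorem stmt_8 (p q : ℕ) (hp : p.Prime) (hq : q.Prime) (hpq : p ≠ q)
    (ρ σ : ℕ) (h : ρ * p + σ * q = (p - 1) * (q - 1))
    (n : ℕ) (a : ℕ → ℤ) (f : Polynomial ℤ)
    (hf : f = ∑ s ∈ Finset.range (n + 1), C (a s) * X ^ (q * s)) :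
    Height (cyclotomic (p * q) ℤ * f) ≤ max (σ + 1) (p - (σ + 1)) * Height f := by
  have huz : (p:ℤ)*(ρ+1) + q*(σ+1) = p*q+1 := by
    have hz : ((ρ*p + σ*q : ℕ) : ℤ) = (((p-1)*(q-1) : ℕ) : ℤ) :=
      congrArg (fun x : ℕ => (x:ℤ)) h
    push_cast [Nat.cast_sub hp.one_le, Nat.cast_sub hq.one_le] at hz
    linear_combination hz
  have hu : p*(ρ+1) + q*(σ+1) = p*q+1 := by exact_mod_cast huz
  have hρ : ρ+1 ≤ q := by
    by_contra hc
    push_neg at hc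
    have h1 : p*(q+1) ≤ p*(ρ+1) := Nat.mul_le_mul_left p (by omega)
    have h2 : p*(ρ+1) ≤ p*q+1 := le_trans (Nat.le_add_right _ _) hu.le
    have h3 : p*(q+1) = p*q + p := by ring
    have hp2 := hp.two_le
    omega
  rw [← FF_eq_cyclotomic p q ρ σ hp hq hpq hu hρ]
  exact FF_height_bound p q hp hq hpq ρ σ h n a f hf
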